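/- For every integer n ≥ 1 and every j ≥ 1, G_n has no zeros in the half-open real interval [−μ_j, −b_j): indeed G_n(x) = x + n² K(x) < 0 for all real x with −μ_j ≤ x < −b_j. -/

import Mathlib

open Filter Topology

/- Indexing convention: the paper's sequences `(a_k)_{k ≥ 1}`, `(b_k)_{k ≥ 1}` are
encoded as functions `a b : ℕ → ℝ`, where index `k : ℕ` corresponds to the paper's
index `k + 1` (so `b 0 = b_1`, etc.). -/

/-- `GPK a b z = K(z) = ∑ a_k / (z + b_k)`. -/
noncomputable def GPK (a b : ℕ → ℝ) (z : ℂ) : ℂ := ∑' k : ℕ, (a k : ℂ) / (z + (b k : ℂ))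

/-- `GPG a b n z = G_n(z) = z + n² K(z)`. -/
noncomputable def GPG (a b : ℕ → ℝ) (n : ℕ) (z : ℂ) : ℂ := z + (n : ℂ) ^ 2 * GPK a b z

lemma GP_summable_aux (a b : ℕ → ℝ) (α : ℝ) (ha : ∀ k, 0 < a k)
    (hsum : HasSum a (α ^ 2)) (hbtop : Tendsto b atTop atTop) (x : ℝ) :
    Summable (fun k => a k / (x + b k)) := by
  apply Summable.of_norm_bounded_eventually_nat hsum.summable
  filter_upwards [hbtop.eventually_ge_atTop (1 - x)] with k hk
  have hx : (1 : ℝ) ≤ x + b k := by linarith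
  rw [Real.norm_eq_abs, abs_div, abs_of_pos (ha k), abs_of_pos (by linarith : (0:ℝ) < x + b k)]
  calc a k / (x + b k) ≤ a k / 1 := by
        apply div_le_div_of_nonneg_left (ha k).le one_pos hx
    _ = a k := div_one _

lemma GPK_real (a b : ℕ → ℝ) (x : ℝ) :
    GPK a b (x : ℂ) = ((∑' k : ℕ, a k / (x + b k) : ℝ) : ℂ) := by
  rw [GPK, Complex.ofReal_tsum]
  congr 1; ext k
  push_cast
  ring

/-- `G_n(x) = x + n² K(x) < 0` (in particular `G_n(x) ≠ 0`) for real
`x ∈ [-μ_j, -b_j)`. -/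
theorem no_zero_in_Ico
    (a b : ℕ → ℝ) (α : ℝ)
    (ha : ∀ k, 0 < a k) (hα : 0 < α) (hsum : HasSum a (α ^ 2))
    (hb0 : 0 ≤ b 0) (hbmono : StrictMono b) (hbtop : Tendsto b atTop atTop)
    (μ : ℕ → ℝ)
    (hμ : ∀ j, b j < μ j ∧ μ j < b (j + 1) ∧ GPK a b (-(μ j : ℂ)) = 0)
    (n : ℕ) (hn : 1 ≤ n) (j : ℕ)
    (x : ℝ) (hx1 : -(μ j) ≤ x) (hx2 : x < -(b j)) :
    (GPG a b n (x : ℂ)).im = 0 ∧ (GPG a b n (x : ℂ)).re < 0 := by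
  obtain ⟨hμ1, hμ2, hμ3⟩ := hμ j
  have hSx : Summable (fun k => a k / (x + b k)) :=
    GP_summable_aux a b α ha hsum hbtop x
  have hSμ : Summable (fun k => a k / (-(μ j) + b k)) :=
    GP_summable_aux a b α ha hsum hbtop (-(μ j))
  -- the sum at -μ j is zero
  have hKμ : (∑' k : ℕ, a k / (-(μ j) + b k)) = 0 := by
    have := GPK_real a b (-(μ j))
    rw [Complex.ofReal_neg] at this
    rw [this] at hμ3
    exact_mod_cast hμ3
  -- termwise comparison
  have hterm : ∀ k, a k / (x + b k) ≤ a k / (-(μ j) + b k) := by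
    intro k
    rcases le_or_gt k j with hk | hk
    · -- both denominators negative
      have hbk : b k ≤ b j := hbmono.monotone hk
      have ht : x + b k < 0 := by linarith
      have hs : -(μ j) + b k ≤ x + b k := by linarith
      have h1 : 1 / (x + b k) ≤ 1 / (-(μ j) + b k) :=
        one_div_le_one_div_of_neg_of_le ht hs
      calc a k / (x + b k) = a k * (1 / (x + b k)) := by ring
        _ ≤ a k * (1 / (-(μ j) + b k)) := by
            exact mul_le_mul_of_nonneg_left h1 (ha k).le
        _ = a k / (-(μ j) + b k) := by ring
    · -- both denominators positive
      have hbk : b (j + 1) ≤ b k := hbmono.monotone hk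
      have hs : 0 < -(μ j) + b k := by linarith
      have hst : -(μ j) + b k ≤ x + b k := by linarith
      exact div_le_div_of_nonneg_left (ha k).le hs hst
  have hKx : (∑' k : ℕ, a k / (x + b k)) ≤ 0 := by
    calc (∑' k : ℕ, a k / (x + b k)) ≤ ∑' k : ℕ, a k / (-(μ j) + b k) :=
          Summable.tsum_le_tsum hterm hSx hSμ
      _ = 0 := hKμ
  have hxneg : x < 0 := by
    have : 0 ≤ b j := le_trans hb0 (hbmono.monotone (Nat.zero_le j))
    linarith
  have hG : GPG a b n (x : ℂ) =
      ((x + (n : ℝ) ^ 2 * (∑' k : ℕ, a k / (x + b k)) : ℝ) : ℂ) := by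
    rw [GPG, GPK_real]
    push_cast
    ring
  rw [hG]
  constructor
  · exact Complex.ofReal_im _
  · rw [Complex.ofReal_re]
    have hn2 : (0:ℝ) ≤ (n:ℝ)^2 := sq_nonneg _
    nlinarith [mul_nonpos_of_nonneg_of_nonpos hn2 hKx]
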